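/- For every t > 0, σ > 0 and λ > 0, there exists a unique p > σ(e^{2t} − 1) satisfying the stationarity equation (t/(2σ)) · ((1/2)·ln(1 + p/σ) − t)^{−2} · (1 + p/σ)^{−1} = λ; moreover, setting r = (1/2)·ln(1 + p/σ) − t, this unique solution satisfies r > 0, r·e^{r} = √(t·e^{−2t}/(2λσ)), and p = σ(e^{2(r + t)} − 1). -/

import Mathlib

lemma rexp_strictMonoOn : StrictMonoOn (fun r : ℝ => r * Real.exp r) (Set.Ici 0) := by
  intro a ha b hb hab
  simp only
  calc a * Real.exp a ≤ a * Real.exp b :=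
        mul_le_mul_of_nonneg_left (Real.exp_le_exp.2 hab.le) ha
    _ < b * Real.exp b := mul_lt_mul_of_pos_right hab (Real.exp_pos b)

lemma exists_unique_rexp (c : ℝ) (hc : 0 < c) :
    ∃! r : ℝ, 0 < r ∧ r * Real.exp r = c := by
  have hcont : ContinuousOn (fun r : ℝ => r * Real.exp r) (Set.Icc 0 c) :=
    (continuous_id.mul Real.continuous_exp).continuousOn
  have hmem : c ∈ Set.Icc ((fun r : ℝ => r * Real.exp r) 0)
      ((fun r : ℝ => r * Real.exp r) c) := by
    simp only [zero_mul]
    exact ⟨hc.le, by nlinarith [Real.one_le_exp hc.le]⟩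
  obtain ⟨r, hr, hfr⟩ := intermediate_value_Icc hc.le hcont hmem
  have hr0 : 0 < r := by
    rcases lt_or_eq_of_le hr.1 with h | h
    · exact h
    · exfalso; rw [← h] at hfr; simp at hfr; linarith
  refine ⟨r, ⟨hr0, hfr⟩, ?_⟩
  rintro s ⟨hs0, hfs⟩
  exact rexp_strictMonoOn.injOn (Set.mem_Ici.2 hs0.le) (Set.mem_Ici.2 hr0.le)
    (hfs.trans hfr.symm)

/-- For every `t > 0`, `σ > 0` and `λ > 0`, there exists a unique
`p > σ(e^{2t} − 1)` satisfying the stationarity equation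
`(t/(2σ)) · ((1/2)·ln(1 + p/σ) − t)^{−2} · (1 + p/σ)^{−1} = λ`; moreover, setting
`r = (1/2)·ln(1 + p/σ) − t`, this unique solution satisfies `r > 0`,
`r·e^r = √(t·e^{−2t}/(2λσ))`, and `p = σ(e^{2(r + t)} − 1)`. -/
theorem stationarity_unique_solution (t σ lam : ℝ) (ht : 0 < t) (hσ : 0 < σ)
    (hlam : 0 < lam) :
    (∃! p : ℝ, σ * (Real.exp (2 * t) - 1) < p ∧
        t / (2 * σ) / ((1 / 2) * Real.log (1 + p / σ) - t) ^ 2 / (1 + p / σ) = lam) ∧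
    (∀ p : ℝ, σ * (Real.exp (2 * t) - 1) < p →
        t / (2 * σ) / ((1 / 2) * Real.log (1 + p / σ) - t) ^ 2 / (1 + p / σ) = lam →
        0 < (1 / 2) * Real.log (1 + p / σ) - t ∧
        ((1 / 2) * Real.log (1 + p / σ) - t) *
            Real.exp ((1 / 2) * Real.log (1 + p / σ) - t) =
          Real.sqrt (t * Real.exp (-2 * t) / (2 * lam * σ)) ∧
        p = σ * (Real.exp (2 * (((1 / 2) * Real.log (1 + p / σ) - t) + t)) - 1)) := by
  have harg : 0 < t * Real.exp (-2 * t) / (2 * lam * σ) := by positivity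
  set c := Real.sqrt (t * Real.exp (-2 * t) / (2 * lam * σ)) with hc_def
  have hc : 0 < c := Real.sqrt_pos.2 harg
  have hc2 : c ^ 2 = t * Real.exp (-2 * t) / (2 * lam * σ) := Real.sq_sqrt harg.le
  have hee : Real.exp (2 * t) * Real.exp (-2 * t) = 1 := by
    rw [← Real.exp_add, show 2 * t + -2 * t = 0 by ring, Real.exp_zero]
  -- basic facts for any p above the threshold
  have key : ∀ p : ℝ, σ * (Real.exp (2 * t) - 1) < p →
      0 < (1 / 2) * Real.log (1 + p / σ) - t ∧
      1 + p / σ = Real.exp (2 * (((1 / 2) * Real.log (1 + p / σ) - t) + t)) := by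
    intro p hp
    have hx : Real.exp (2 * t) < 1 + p / σ := by
      have h1 : Real.exp (2 * t) - 1 < p / σ := (lt_div_iff₀ hσ).2 (by linarith [hp, mul_comm σ (Real.exp (2 * t) - 1)])
      linarith
    have hx0 : 0 < 1 + p / σ := lt_trans (Real.exp_pos _) hx
    have hlog : 2 * t < Real.log (1 + p / σ) := by
      rw [← Real.log_exp (2 * t)]
      exact Real.log_lt_log (Real.exp_pos _) hx
    refine ⟨by linarith, ?_⟩
    rw [show 2 * (((1 / 2) * Real.log (1 + p / σ) - t) + t) = Real.log (1 + p / σ) by ring,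
      Real.exp_log hx0]
  -- equation equivalence
  have keyEq : ∀ p : ℝ, σ * (Real.exp (2 * t) - 1) < p →
      (t / (2 * σ) / ((1 / 2) * Real.log (1 + p / σ) - t) ^ 2 / (1 + p / σ) = lam ↔
        ((1 / 2) * Real.log (1 + p / σ) - t) *
          Real.exp ((1 / 2) * Real.log (1 + p / σ) - t) = c) := by
    intro p hp
    obtain ⟨hr, hxe⟩ := key p hp
    set r := (1 / 2) * Real.log (1 + p / σ) - t with hrdef
    clear_value r
    have he : Real.exp (2 * (r + t)) = (Real.exp r) ^ 2 * Real.exp (2 * t) := by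
      rw [show 2 * (r + t) = r + r + 2 * t by ring, Real.exp_add, Real.exp_add]; ring
    have hx0 : 0 < 1 + p / σ := by rw [hxe]; exact Real.exp_pos _
    have hr2 : r ^ 2 ≠ 0 := pow_ne_zero _ (ne_of_gt hr)
    have h2σ : (2 : ℝ) * σ ≠ 0 := by positivity
    have hxne : (1 : ℝ) + p / σ ≠ 0 := ne_of_gt hx0
    have hσpeq : σ * (1 + p / σ) = σ + p := by field_simp
    have hσp : (0 : ℝ) < σ + p := by rw [← hσpeq]; exact mul_pos hσ hx0
    have hσp' : σ + p ≠ 0 := ne_of_gt hσp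
    constructor
    · intro heq
      have h1 : t = lam * (2 * σ) * r ^ 2 * (1 + p / σ) := by
        rw [div_eq_iff hxne, div_eq_iff hr2, div_eq_iff h2σ] at heq
        linear_combination heq
      have h1' : t = lam * (2 * σ) * r ^ 2 * ((Real.exp r) ^ 2 * Real.exp (2 * t)) := by
        rw [hxe, he] at h1; exact h1
      have h2 : (r * Real.exp r) ^ 2 = t * Real.exp (-2 * t) / (2 * lam * σ) := by
        rw [eq_div_iff (by positivity : (2 : ℝ) * lam * σ ≠ 0)]
        linear_combination -Real.exp (-2 * t) * h1' -
          (lam * (2 * σ) * r ^ 2 * (Real.exp r) ^ 2) * hee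
      have hnn : 0 ≤ r * Real.exp r := by positivity
      rw [← Real.sqrt_sq hnn, h2, hc_def]
    · intro hre
      have h2 : (r * Real.exp r) ^ 2 = t * Real.exp (-2 * t) / (2 * lam * σ) := by
        rw [hre]; exact hc2
      have h2' : (r * Real.exp r) ^ 2 * (2 * lam * σ) = t * Real.exp (-2 * t) := by
        rw [h2]; field_simp
      rw [hxe, he]
      field_simp
      linear_combination (norm := ring_nf) -Real.exp (2 * t) * h2' - t * hee
  constructor
  · -- existence and uniqueness
    obtain ⟨r, ⟨hr0, hre⟩, _⟩ := exists_unique_rexp c hc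
    refine ⟨σ * (Real.exp (2 * (r + t)) - 1), ?_, ?_⟩
    · have hp : σ * (Real.exp (2 * t) - 1) < σ * (Real.exp (2 * (r + t)) - 1) := by
        have : Real.exp (2 * t) < Real.exp (2 * (r + t)) :=
          Real.exp_lt_exp.2 (by linarith)
        nlinarith
      refine ⟨hp, ?_⟩
      have hxe : 1 + σ * (Real.exp (2 * (r + t)) - 1) / σ = Real.exp (2 * (r + t)) := by
        field_simp; ring
      have hrr : (1 / 2) * Real.log (1 + σ * (Real.exp (2 * (r + t)) - 1) / σ) - t = r := by
        rw [hxe, Real.log_exp]; ring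
      rw [(keyEq _ hp), hrr]
      exact hre
    · rintro p ⟨hp, heq⟩
      obtain ⟨hr', hxe'⟩ := key p hp
      have hre' := (keyEq p hp).1 heq
      have : (1 / 2) * Real.log (1 + p / σ) - t = r :=
        rexp_strictMonoOn.injOn (Set.mem_Ici.2 hr'.le) (Set.mem_Ici.2 hr0.le)
          (hre'.trans hre.symm)
      have hp' : p = σ * (Real.exp (2 * (((1 / 2) * Real.log (1 + p / σ) - t) + t)) - 1) := by
        rw [← hxe']; field_simp; ring
      rw [hp', this]
  · intro p hp heq
    obtain ⟨hr, hxe⟩ := key p hp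
    refine ⟨hr, (keyEq p hp).1 heq, ?_⟩
    rw [← hxe]; field_simp; ring
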